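/- (Achievability of the common information.) Suppose there exist deterministic functions ζ1 : 𝒳 → 𝒴 and ζ2 : 𝒵 → 𝒴 with ζ1(X) = ζ2(Z) almost surely, and write Y = ζ1(X). Then for every t ∈ [0, 1] the triple (t·H(Y), t·H(Y), t·H(Y)) lies in the closure of the set R of achievable triples. -/

import Mathlib

open scoped BigOperators Classical

namespace Biclustering

variable {α β γ : Type*}

/-- A probability mass function on a finite type. -/
def IsPMF [Fintype α] (p : α → ℝ) : Prop := (∀ a, 0 ≤ p a) ∧ ∑ a, p a = 1

/-- Shannon entropy (in nats) of a pmf on a finite type. -/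
noncomputable def ent [Fintype α] (p : α → ℝ) : ℝ := - ∑ a, p a * Real.log (p a)

/-- Pushforward (distribution of `f` under `p`). -/
noncomputable def pmap [Fintype α] (f : α → β) (p : α → ℝ) : β → ℝ :=
  fun b => ∑ a, if f a = b then p a else 0

/-- Entropy of the random variable `f` under the joint pmf `p`. -/
noncomputable def Hof [Fintype α] [Fintype β] (p : α → ℝ) (f : α → β) : ℝ := ent (pmap f p)

/-- Mutual information `I(f; g)` under the joint pmf `p`. -/
noncomputable def MI [Fintype α] [Fintype β] [Fintype γ] (p : α → ℝ) (f : α → β) (g : α → γ) : ℝ :=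
  Hof p f + Hof p g - Hof p (fun a => (f a, g a))

/-- The pmf of `n` i.i.d. copies of a source with pmf `p`. -/
noncomputable def iid [Fintype α] (n : ℕ) (p : α → ℝ) : (Fin n → α) → ℝ :=
  fun x => ∏ i, p (x i)

set_option linter.unusedSectionVars false
set_option maxHeartbeats 1000000

section aux
variable [Fintype α] [Fintype β] [Fintype γ]

lemma sum_prod_fn {n : ℕ} (G : Fin n → α → ℝ) :
    ∑ ω : Fin n → α, ∏ j, G j (ω j) = ∏ j, ∑ a, G j a := (Fintype.prod_sum _).symm

lemma pmap_nonneg {p : α → ℝ} (h : ∀ a, 0 ≤ p a) (f : α → β) (b : β) : 0 ≤ pmap f p b := by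
  refine Finset.sum_nonneg fun a _ => ?_
  split <;> simp [h a]

lemma pmap_sum {p : α → ℝ} (f : α → β) : ∑ b, pmap f p b = ∑ a, p a := by
  unfold pmap
  rw [Finset.sum_comm]
  simp

lemma pmap_isPMF {p : α → ℝ} (hp : IsPMF p) (f : α → β) : IsPMF (pmap f p) :=
  ⟨pmap_nonneg hp.1 f, by rw [pmap_sum]; exact hp.2⟩

lemma iid_nonneg {p : α → ℝ} (h : ∀ a, 0 ≤ p a) (n : ℕ) (ω : Fin n → α) : 0 ≤ iid n p ω :=
  Finset.prod_nonneg fun i _ => h (ω i)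

lemma iid_isPMF {p : α → ℝ} (hp : IsPMF p) (n : ℕ) : IsPMF (iid n p) := by
  refine ⟨iid_nonneg hp.1 n, ?_⟩
  calc ∑ ω : Fin n → α, ∏ i, p (ω i) = ∏ _i : Fin n, ∑ a, p a := sum_prod_fn _
  _ = 1 := by simp [hp.2]

lemma pmf_le_one {p : α → ℝ} (hp : IsPMF p) (a : α) : p a ≤ 1 := by
  rw [← hp.2]
  exact Finset.single_le_sum (fun b _ => hp.1 b) (Finset.mem_univ a)

lemma neg_mul_log_nonneg {x : ℝ} (h0 : 0 ≤ x) (h1 : x ≤ 1) : 0 ≤ -(x * Real.log x) := by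
  rcases eq_or_lt_of_le h0 with h | h
  · simp [← h]
  · have := Real.log_nonpos (le_of_lt h) h1
    nlinarith

lemma ent_nonneg {p : α → ℝ} (hp : IsPMF p) : 0 ≤ ent p := by
  unfold ent
  rw [← Finset.sum_neg_distrib]
  exact Finset.sum_nonneg fun a _ => neg_mul_log_nonneg (hp.1 a) (pmf_le_one hp a)

lemma Hof_unique [Unique β] {p : α → ℝ} (hp : IsPMF p) (f : α → β) : Hof p f = 0 := by
  have h1 : ∀ b, pmap f p b = 1 := by
    intro b
    unfold pmap
    rw [← hp.2]
    refine Finset.sum_congr rfl fun a _ => ?_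
    rw [if_pos (Subsingleton.elim _ _)]
  simp [Hof, ent, h1]

lemma MI_unique {M N' : Type*} [Fintype M] [Fintype N'] [Unique M] [Unique N']
    {p : α → ℝ} (hp : IsPMF p) (f : α → M) (g : α → N') : MI p f g = 0 := by
  haveI : Unique (M × N') :=
    { default := (default, default),
      uniq := fun x => by
        rw [Prod.ext_iff]
        exact ⟨Subsingleton.elim _ _, Subsingleton.elim _ _⟩ }
  unfold MI
  rw [Hof_unique hp, Hof_unique hp, Hof_unique hp]
  ring

lemma pmap_comp {p : α → ℝ} (f : α → β) (g : β → γ) :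
    pmap (fun a => g (f a)) p = pmap g (pmap f p) := by
  funext c
  unfold pmap
  have h1 : ∀ b : β, (if g b = c then ∑ a, if f a = b then p a else 0 else 0)
      = ∑ a, if g b = c then (if f a = b then p a else 0) else 0 := by
    intro b; split <;> simp
  simp only [h1]
  rw [Finset.sum_comm]
  refine Finset.sum_congr rfl fun a _ => ?_
  symm
  rw [Finset.sum_eq_single (f a)]
  · by_cases h : g (f a) = c <;> simp [h]
  · intro b _ hb
    have : ¬ (f a = b) := fun e => hb e.symm
    simp [this]
  · simp

lemma pmap_iid {p : α → ℝ} (hp : IsPMF p) (h : α → β) {n n' : ℕ} (hle : n ≤ n') :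
    pmap (fun (ω : Fin n' → α) (i : Fin n) => h (ω (Fin.castLE hle i))) (iid n' p)
      = iid n (pmap h p) := by
  funext y
  simp only [pmap, iid]
  set G : Fin n' → α → ℝ :=
    fun j a => if hj : (j : ℕ) < n then (if h a = y ⟨j, hj⟩ then p a else 0) else p a with hG
  have key : ∀ ω : Fin n' → α,
      (if (fun i => h (ω (Fin.castLE hle i))) = y then ∏ j, p (ω j) else 0)
        = ∏ j, G j (ω j) := by
    intro ω
    by_cases hy : (fun i => h (ω (Fin.castLE hle i))) = y
    · rw [if_pos hy]
      refine Finset.prod_congr rfl fun j _ => ?_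
      by_cases hj : (j : ℕ) < n
      · have hv : h (ω j) = y ⟨j, hj⟩ := by
          have h2 := congrFun hy ⟨(j : ℕ), hj⟩
          have h3 : Fin.castLE hle ⟨(j : ℕ), hj⟩ = j := Fin.ext rfl
          rwa [h3] at h2
        simp [hG, hj, hv]
      · simp [hG, hj]
    · rw [if_neg hy]
      symm
      obtain ⟨i, hi⟩ : ∃ i, h (ω (Fin.castLE hle i)) ≠ y i := by
        by_contra hc; push_neg at hc; exact hy (funext hc)
      refine Finset.prod_eq_zero (Finset.mem_univ (Fin.castLE hle i)) ?_
      have hj : ((Fin.castLE hle i : Fin n') : ℕ) < n := i.isLt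
      simp only [hG]
      rw [dif_pos hj, if_neg]
      exact hi
  refine (Finset.sum_congr rfl fun ω _ => (?_ : _ = ∏ j, G j (ω j))).trans ?_
  · convert key ω
  rw [sum_prod_fn]
  have hsum : ∀ j : Fin n', (∑ a, G j a)
      = if hj : (j : ℕ) < n then (∑ a, if h a = y ⟨j, hj⟩ then p a else 0) else 1 := by
    intro j
    by_cases hj : (j : ℕ) < n
    · rw [dif_pos hj]
      simp only [hG, hj, dite_true]
    · rw [dif_neg hj]
      simp only [hG, hj]
      simpa using hp.2
  simp only [hsum]
  set D : ℕ → ℝ :=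
    fun m => if hm : m < n then (∑ a, if h a = y ⟨m, hm⟩ then p a else 0) else 1 with hD
  obtain ⟨k, rfl⟩ : ∃ k, n' = n + k := ⟨n' - n, (Nat.add_sub_cancel' hle).symm⟩
  have e1 : (∏ j : Fin (n + k), if hj : (j : ℕ) < n
        then (∑ a, if h a = y ⟨j, hj⟩ then p a else 0) else 1)
      = ∏ m ∈ Finset.range (n + k), D m := Fin.prod_univ_eq_prod_range D (n + k)
  rw [e1, Finset.prod_range_add]
  have e2 : ∀ x ∈ Finset.range k, D (n + x) = 1 := by
    intro x _
    simp [hD]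
  rw [Finset.prod_congr rfl e2, Finset.prod_const_one, mul_one]
  have e3 : (∏ m ∈ Finset.range n, D m) = ∏ i : Fin n, D i :=
    (Fin.prod_univ_eq_prod_range D n).symm
  rw [e3]
  refine Finset.prod_congr rfl fun i _ => ?_
  simp [hD, i.isLt, Fin.eta]

lemma pmap_eq_of_aeq {p : α → ℝ} {F G : α → β} (hFG : ∀ a, p a ≠ 0 → F a = G a) :
    pmap G p = pmap F p := by
  funext b
  refine Finset.sum_congr rfl fun a _ => ?_
  by_cases hpa : p a = 0
  · simp [hpa]
  · rw [hFG a hpa]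

lemma pmap_pair_diag {p : α → ℝ} {F G : α → β} (hFG : ∀ a, p a ≠ 0 → F a = G a) (b c : β) :
    pmap (fun a => (F a, G a)) p (b, c) = if b = c then pmap F p b else 0 := by
  unfold pmap
  by_cases hbc : b = c
  · subst hbc
    rw [if_pos rfl]
    refine Finset.sum_congr rfl fun a _ => ?_
    by_cases hpa : p a = 0
    · simp [hpa]
    · by_cases h : F a = b <;> simp [Prod.ext_iff, hFG a hpa, h, (hFG a hpa) ▸ h]
  · rw [if_neg hbc]
    refine Finset.sum_eq_zero fun a _ => ?_
    by_cases hpa : p a = 0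
    · simp [hpa]
    · simp only [hFG a hpa, Prod.mk.injEq, ite_eq_right_iff, and_imp]
      intro h1 h2
      exact absurd (h1.symm.trans h2) hbc

lemma MI_diag {p : α → ℝ} {M : ℕ} (F G : α → Fin M)
    (hFG : ∀ a, p a ≠ 0 → F a = G a) : MI p F G = Hof p F := by
  have hG : pmap G p = pmap F p := pmap_eq_of_aeq hFG
  have hpair : Hof p (fun a => (F a, G a)) = Hof p F := by
    unfold Hof ent
    congr 1
    rw [Fintype.sum_prod_type]
    refine Finset.sum_congr rfl fun b _ => ?_
    rw [Finset.sum_eq_single b]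
    · rw [pmap_pair_diag hFG b b, if_pos rfl]
    · intro c _ hc
      rw [pmap_pair_diag hFG b c, if_neg (fun e => hc e.symm)]
      simp
    · simp
  unfold MI
  rw [hpair]
  unfold Hof
  rw [hG]
  ring

noncomputable def Vr (q : α → ℝ) : ℝ := ∑ a, q a * (-Real.log (q a) - ent q) ^ 2

lemma Vr_nonneg {q : α → ℝ} (hq0 : ∀ a, 0 ≤ q a) : 0 ≤ Vr q :=
  Finset.sum_nonneg fun a _ => mul_nonneg (hq0 a) (sq_nonneg _)

lemma Eg_zero {q : α → ℝ} (hq : IsPMF q) :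
    ∑ a, q a * (-Real.log (q a) - ent q) = 0 := by
  have h1 : ∀ a ∈ Finset.univ, q a * (-Real.log (q a) - ent q)
      = -(q a * Real.log (q a)) - q a * ent q := fun a _ => by ring
  rw [Finset.sum_congr rfl h1, Finset.sum_sub_distrib, Finset.sum_neg_distrib,
    ← Finset.sum_mul, hq.2, one_mul, ent]
  ring

lemma second_moment {q : α → ℝ} (hq : IsPMF q) (n : ℕ) :
    ∑ ω : Fin n → α, iid n q ω * (∑ i, (-Real.log (q (ω i)) - ent q)) ^ 2
      = n * Vr q := by
  set g : α → ℝ := fun a => -Real.log (q a) - ent q with hg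
  have expand : ∀ ω : Fin n → α, iid n q ω * (∑ i, g (ω i)) ^ 2
      = ∑ i, ∑ j, iid n q ω * (g (ω i) * g (ω j)) := by
    intro ω
    rw [sq, Finset.sum_mul_sum, Finset.mul_sum]
    exact Finset.sum_congr rfl fun i _ => by rw [Finset.mul_sum]
  calc ∑ ω : Fin n → α, iid n q ω * (∑ i, g (ω i)) ^ 2
      = ∑ ω : Fin n → α, ∑ i, ∑ j, iid n q ω * (g (ω i) * g (ω j)) :=
        Finset.sum_congr rfl fun ω _ => expand ω
    _ = ∑ i, ∑ j, ∑ ω : Fin n → α, iid n q ω * (g (ω i) * g (ω j)) := by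
        rw [Finset.sum_comm]
        exact Finset.sum_congr rfl fun i _ => Finset.sum_comm
    _ = ∑ i : Fin n, ∑ j : Fin n, (if i = j then Vr q else 0) := by
        refine Finset.sum_congr rfl fun i _ => Finset.sum_congr rfl fun j _ => ?_
        have hfac : ∀ ω : Fin n → α, iid n q ω * (g (ω i) * g (ω j))
            = ∏ k, (q (ω k) * ((if k = i then g (ω k) else 1) * (if k = j then g (ω k) else 1))) := by
          intro ω
          rw [Finset.prod_mul_distrib, Finset.prod_mul_distrib,
            Finset.prod_ite_eq' Finset.univ i (fun k => g (ω k)),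
            Finset.prod_ite_eq' Finset.univ j (fun k => g (ω k))]
          simp [iid]
        calc ∑ ω : Fin n → α, iid n q ω * (g (ω i) * g (ω j))
            = ∑ ω : Fin n → α, ∏ k,
              ((fun k a => q a * ((if k = i then g a else 1) * (if k = j then g a else 1))) k (ω k)) :=
              Finset.sum_congr rfl fun ω _ => hfac ω
          _ = ∏ k, ∑ a, q a * ((if k = i then g a else 1) * (if k = j then g a else 1)) :=
              sum_prod_fn (fun k a => q a * ((if k = i then g a else 1) * (if k = j then g a else 1)))
          _ = if i = j then Vr q else 0 := by
              by_cases hij : i = j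
              · subst hij
                rw [if_pos rfl]
                have h1 : ∀ k : Fin n, (∑ a, q a * ((if k = i then g a else 1) * (if k = i then g a else 1)))
                    = if k = i then Vr q else 1 := by
                  intro k
                  by_cases hk : k = i
                  · rw [if_pos hk, Vr]
                    refine Finset.sum_congr rfl fun a _ => ?_
                    rw [if_pos hk]
                    simp only [hg]
                    ring
                  · rw [if_neg hk]
                    have h2 : ∀ a ∈ Finset.univ,
                        q a * ((if k = i then g a else 1) * (if k = i then g a else 1)) = q a :=
                      fun a _ => by rw [if_neg hk]; ring
                    rw [Finset.sum_congr rfl h2, hq.2]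
                rw [Finset.prod_congr rfl fun k _ => h1 k,
                  Finset.prod_ite_eq' Finset.univ i (fun _ => Vr q)]
                simp
              · rw [if_neg hij]
                refine Finset.prod_eq_zero (Finset.mem_univ i) ?_
                have h2 : ∀ a ∈ Finset.univ,
                    q a * ((if i = i then g a else 1) * (if i = j then g a else 1)) = q a * g a :=
                  fun a _ => by rw [if_pos rfl, if_neg hij]; ring
                rw [Finset.sum_congr rfl h2]
                simpa [hg] using Eg_zero hq
    _ = n * Vr q := by
        rw [Finset.sum_congr rfl (fun i _ => Finset.sum_ite_eq Finset.univ i (fun _ => Vr q))]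
        simp [Finset.sum_const, Finset.card_univ, nsmul_eq_mul]

lemma code_exists {q : α → ℝ} (hq : IsPMF q) {n : ℕ} (hn : 0 < n) {δ : ℝ}
    (hδ0 : 0 < δ) (hδH : δ ≤ ent q) :
    ∃ (c : ℕ) (φ : (Fin n → α) → Fin (c + 1)),
      (c : ℝ) ≤ Real.exp (n * (ent q + δ)) ∧
      (ent q - δ) * ((n : ℝ) - Vr q / δ ^ 2) ≤ ent (pmap φ (iid n q)) := by
  classical
  set H := ent q with hH
  set Q := iid n q with hQdef
  have hQ : IsPMF Q := iid_isPMF hq n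
  set pred : (Fin n → α) → Prop :=
    fun ω => Real.exp (-((n : ℝ) * (H + δ))) ≤ Q ω ∧ Q ω ≤ Real.exp (-((n : ℝ) * (H - δ)))
    with hpred
  set A : Finset (Fin n → α) := Finset.univ.filter pred with hA
  set c := A.card with hc
  set φ : (Fin n → α) → Fin (c + 1) :=
    fun ω => if hω : ω ∈ A then (A.equivFin ⟨ω, hω⟩).castSucc else Fin.last c with hφ
  refine ⟨c, φ, ?_, ?_⟩
  · -- cardinality bound
    have h1 : (c : ℝ) * Real.exp (-((n : ℝ) * (H + δ))) ≤ ∑ ω ∈ A, Q ω := by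
      have := Finset.card_nsmul_le_sum A Q (Real.exp (-((n : ℝ) * (H + δ))))
        (fun ω hω => ((Finset.mem_filter.mp hω).2).1)
      rwa [nsmul_eq_mul] at this
    have h2 : ∑ ω ∈ A, Q ω ≤ 1 := by
      rw [← hQ.2]
      exact Finset.sum_le_sum_of_subset_of_nonneg (Finset.subset_univ A)
        (fun ω _ _ => hQ.1 ω)
    have hE : (0:ℝ) < Real.exp (-((n : ℝ) * (H + δ))) := Real.exp_pos _
    have key : (c : ℝ) ≤ 1 / Real.exp (-((n : ℝ) * (H + δ))) := by
      rw [le_div_iff₀ hE]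
      linarith
    rwa [one_div, ← Real.exp_neg, neg_neg] at key
  · -- entropy bound
    have hr : IsPMF (pmap φ Q) := pmap_isPMF hQ φ
    -- value of pmap φ Q at castSucc i
    have hval : ∀ i : Fin c,
        pmap φ Q (Fin.castSucc i) = Q ((A.equivFin.symm i : A) : Fin n → α) := by
      intro i
      have hcond : ∀ ω, (φ ω = Fin.castSucc i) ↔ ω = ((A.equivFin.symm i : A) : Fin n → α) := by
        intro ω
        constructor
        · intro hφω
          by_cases hω : ω ∈ A
          · rw [hφ] at hφω
            simp only [dif_pos hω] at hφω
            have h3 : A.equivFin ⟨ω, hω⟩ = i := Fin.castSucc_inj.mp hφω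
            have h4 : (⟨ω, hω⟩ : A) = A.equivFin.symm i := by
              rw [← h3, Equiv.symm_apply_apply]
            exact congrArg Subtype.val h4
          · rw [hφ] at hφω
            simp only [dif_neg hω] at hφω
            exact absurd hφω.symm (Fin.castSucc_lt_last i).ne
        · rintro rfl
          have hmem : ((A.equivFin.symm i : A) : Fin n → α) ∈ A := (A.equivFin.symm i).2
          rw [hφ]
          simp only [dif_pos hmem]
          rw [show (⟨((A.equivFin.symm i : A) : Fin n → α), hmem⟩ : A) = A.equivFin.symm i from
            Subtype.ext rfl, Equiv.apply_symm_apply]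
      simp only [pmap]
      rw [Finset.sum_eq_single (((A.equivFin.symm i : A)) : Fin n → α)]
      · rw [if_pos ((hcond _).mpr rfl)]
      · intro ω _ hne
        rw [if_neg (fun h => hne ((hcond ω).mp h))]
      · intro h
        exact absurd (Finset.mem_univ _) h
    -- drop the junk symbol
    have hent_eq : ent (pmap φ Q) = (∑ i : Fin c, -(pmap φ Q (Fin.castSucc i)
          * Real.log (pmap φ Q (Fin.castSucc i))))
        + -(pmap φ Q (Fin.last c) * Real.log (pmap φ Q (Fin.last c))) := by
      rw [ent, ← Finset.sum_neg_distrib, Fin.sum_univ_castSucc]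
    have hlast : 0 ≤ -(pmap φ Q (Fin.last c) * Real.log (pmap φ Q (Fin.last c))) :=
      neg_mul_log_nonneg (hr.1 _) (pmf_le_one hr _)
    have hsum_eq : (∑ i : Fin c, -(pmap φ Q (Fin.castSucc i)
          * Real.log (pmap φ Q (Fin.castSucc i))))
        = ∑ ω ∈ A, -(Q ω * Real.log (Q ω)) := by
      rw [Finset.sum_congr rfl (fun i (_ : i ∈ Finset.univ) => by rw [hval i])]
      rw [← Finset.sum_coe_sort A (fun ω => -(Q ω * Real.log (Q ω)))]
      exact Equiv.sum_comp A.equivFin.symm (fun x : A => -(Q (x : Fin n → α) * Real.log (Q (x : Fin n → α))))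
    -- per element lower bound on A
    have hA_elem : ∀ ω ∈ A, Q ω * ((n : ℝ) * (H - δ)) ≤ -(Q ω * Real.log (Q ω)) := by
      intro ω hω
      obtain ⟨hlo, hhi⟩ := (Finset.mem_filter.mp hω).2
      have hQpos : 0 < Q ω := lt_of_lt_of_le (Real.exp_pos _) hlo
      have hlog : Real.log (Q ω) ≤ -((n : ℝ) * (H - δ)) := by
        have := Real.log_le_log hQpos hhi
        rwa [Real.log_exp] at this
      nlinarith [hQ.1 ω]
    have hAsum : (∑ ω ∈ A, Q ω) * ((n : ℝ) * (H - δ)) ≤ ∑ ω ∈ A, -(Q ω * Real.log (Q ω)) := by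
      rw [Finset.sum_mul]
      exact Finset.sum_le_sum hA_elem
    -- Chebyshev
    set PA := ∑ ω ∈ A, Q ω with hPA
    set Pe := ∑ ω ∈ Finset.univ.filter (fun ω => ¬ pred ω), Q ω with hPe
    have hsplit : PA + Pe = 1 := by
      rw [hPA, hPe, hA, Finset.sum_filter_add_sum_filter_not Finset.univ pred Q]
      exact hQ.2
    have hPe_nonneg : 0 ≤ Pe := Finset.sum_nonneg fun ω _ => hQ.1 ω
    have hpt : ∀ ω ∈ Finset.univ.filter (fun ω => ¬ pred ω),
        Q ω * ((n : ℝ) * δ) ^ 2 ≤ Q ω * (∑ i, (-Real.log (q (ω i)) - H)) ^ 2 := by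
      intro ω hω
      have hnp : ¬ pred ω := (Finset.mem_filter.mp hω).2
      rcases eq_or_lt_of_le (hQ.1 ω) with h0 | h0
      · rw [← h0]; simp
      · have hfac : ∀ i ∈ Finset.univ, q (ω i) ≠ 0 := by
          intro i _ hzero
          have : Q ω = 0 := by
            rw [hQdef, iid]
            exact Finset.prod_eq_zero (Finset.mem_univ i) hzero
          exact absurd this (ne_of_gt h0)
        have hlogQ : Real.log (Q ω) = ∑ i, Real.log (q (ω i)) := by
          rw [hQdef, iid]
          exact Real.log_prod hfac
        have hXS : (∑ i, (-Real.log (q (ω i)) - H)) = -Real.log (Q ω) - n * H := by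
          rw [Finset.sum_sub_distrib, Finset.sum_neg_distrib, ← hlogQ]
          simp [Finset.sum_const, Finset.card_univ, nsmul_eq_mul]
        have hX2 : ((n : ℝ) * δ) ^ 2 ≤ (∑ i, (-Real.log (q (ω i)) - H)) ^ 2 := by
          rw [hXS]
          have hnδ : (0:ℝ) ≤ (n : ℝ) * δ :=
            mul_nonneg (Nat.cast_nonneg n) hδ0.le
          rw [hpred] at hnp
          rcases not_and_or.mp hnp with hcase | hcase
          · push_neg at hcase
            have hl := Real.log_lt_log h0 hcase
            rw [Real.log_exp] at hl
            nlinarith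
          · push_neg at hcase
            have hl := Real.log_lt_log (Real.exp_pos _) hcase
            rw [Real.log_exp] at hl
            nlinarith
        exact mul_le_mul_of_nonneg_left hX2 (hQ.1 ω)
    have hcheb : Pe * ((n : ℝ) * δ) ^ 2 ≤ (n : ℝ) * Vr q := by
      calc Pe * ((n : ℝ) * δ) ^ 2
          = ∑ ω ∈ Finset.univ.filter (fun ω => ¬ pred ω), Q ω * ((n : ℝ) * δ) ^ 2 := by
            rw [hPe, Finset.sum_mul]
        _ ≤ ∑ ω ∈ Finset.univ.filter (fun ω => ¬ pred ω),
              Q ω * (∑ i, (-Real.log (q (ω i)) - H)) ^ 2 := Finset.sum_le_sum hpt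
        _ ≤ ∑ ω : Fin n → α, Q ω * (∑ i, (-Real.log (q (ω i)) - H)) ^ 2 :=
            Finset.sum_le_sum_of_subset_of_nonneg (Finset.filter_subset _ _)
              (fun ω _ _ => mul_nonneg (hQ.1 ω) (sq_nonneg _))
        _ = (n : ℝ) * Vr q := second_moment hq n
    have hn0 : (0:ℝ) < n := by exact_mod_cast hn
    have hδ2 : (0:ℝ) < δ ^ 2 := by positivity
    have hnPe : (n : ℝ) * Pe ≤ Vr q / δ ^ 2 := by
      rw [le_div_iff₀ hδ2]
      have h5 : (n : ℝ) * ((n : ℝ) * Pe * δ ^ 2) ≤ (n : ℝ) * Vr q := by nlinarith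
      exact le_of_mul_le_mul_left h5 hn0
    -- combine
    have hHδ : 0 ≤ H - δ := by linarith
    calc (H - δ) * ((n : ℝ) - Vr q / δ ^ 2)
        ≤ (H - δ) * ((n : ℝ) * PA) := by
          apply mul_le_mul_of_nonneg_left _ hHδ
          nlinarith
      _ = PA * ((n : ℝ) * (H - δ)) := by ring
      _ ≤ ∑ ω ∈ A, -(Q ω * Real.log (Q ω)) := hAsum
      _ ≤ ent (pmap φ Q) := by
          rw [hent_eq, hsum_eq]
          linarith

end aux

variable {𝒳 𝒵 : Type} [Fintype 𝒳] [Fintype 𝒵]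

/-- `(μ, R1, R2)` is achievable for the two-source biclustering problem with source pmf `p`. -/
def Achievable (p : 𝒳 × 𝒵 → ℝ) (μ R1 R2 : ℝ) : Prop :=
  ∃ (n M1 M2 : ℕ), 0 < n ∧
    Real.log M1 ≤ n * R1 ∧ Real.log M2 ≤ n * R2 ∧
    ∃ (f : (Fin n → 𝒳) → Fin M1) (g : (Fin n → 𝒵) → Fin M2),
      μ ≤ (MI (iid n p) (fun ω => f (fun i => (ω i).1)) (fun ω => g (fun i => (ω i).2))) / n

/-- **Achievability of the common information:** if `ζ1(X) = ζ2(Z)` almost surely, then with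
`Y = ζ1(X)`, for every `t ∈ [0, 1]` the triple `(t·H(Y), t·H(Y), t·H(Y))` lies in the
closure of the achievable region. -/
theorem common_information_achievable
    (p : 𝒳 × 𝒵 → ℝ) (hp : IsPMF p)
    {𝒴 : Type} [Fintype 𝒴] (ζ1 : 𝒳 → 𝒴) (ζ2 : 𝒵 → 𝒴)
    (hcommon : ∀ x z, p (x, z) ≠ 0 → ζ1 x = ζ2 z)
    (t : ℝ) (ht0 : 0 ≤ t) (ht1 : t ≤ 1) :
    (t * Hof p (fun w => ζ1 w.1), t * Hof p (fun w => ζ1 w.1), t * Hof p (fun w => ζ1 w.1))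
      ∈ closure { s : ℝ × ℝ × ℝ | Achievable p s.1 s.2.1 s.2.2 } := by
  classical
  set q : 𝒴 → ℝ := pmap (fun w : 𝒳 × 𝒵 => ζ1 w.1) p with hqdef
  have hq : IsPMF q := pmap_isPMF hp _
  set H : ℝ := ent q with hHdef
  have hHof : Hof p (fun w : 𝒳 × 𝒵 => ζ1 w.1) = H := by
    rw [hHdef, hqdef]
    rfl
  rw [hHof]
  have hH0 : 0 ≤ H := by rw [hHdef]; exact ent_nonneg hq
  have key : ∀ ε : ℝ, 0 < ε → Achievable p (t * H - ε) (t * H + ε) (t * H + ε) := by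
    intro ε hε
    by_cases htriv : t * H ≤ ε
    · refine ⟨1, 1, 1, Nat.one_pos, ?_, ?_, (fun _ => (0 : Fin 1)), (fun _ => (0 : Fin 1)), ?_⟩
      · have := mul_nonneg ht0 hH0
        simp only [Nat.cast_one, Real.log_one, one_mul]
        linarith
      · have := mul_nonneg ht0 hH0
        simp only [Nat.cast_one, Real.log_one, one_mul]
        linarith
      · have h2 : MI (iid 1 p) (fun _ : Fin 1 → 𝒳 × 𝒵 => (0 : Fin 1))
            (fun _ : Fin 1 → 𝒳 × 𝒵 => (0 : Fin 1)) / ((1 : ℕ) : ℝ) = 0 := by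
          rw [MI_unique (iid_isPMF hp 1)]
          simp
        exact le_trans (by linarith : t * H - ε ≤ 0) (le_of_eq h2.symm)
    · push_neg at htriv
      have ht' : 0 < t := by
        rcases ht0.lt_or_eq with h | h
        · exact h
        · exfalso
          rw [← h, zero_mul] at htriv
          linarith
      have hH : 0 < H := by nlinarith
      set δ : ℝ := ε / (2 * (H + 1)) with hδdef
      have hδ0 : 0 < δ := by rw [hδdef]; positivity
      have hδε : δ ≤ ε / 2 := by
        rw [hδdef, div_le_div_iff₀ (by positivity) (by norm_num)]
        nlinarith
      have htH_leH : t * H ≤ H := by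
        nlinarith [mul_nonneg (by linarith : (0:ℝ) ≤ 1 - t) hH0]
      have hδH : δ ≤ H := by linarith
      set V : ℝ := Vr q with hVdef
      have hV0 : 0 ≤ V := by rw [hVdef]; exact Vr_nonneg hq.1
      have hlog2 : (0:ℝ) ≤ Real.log 2 := Real.log_nonneg one_le_two
      have hHV : 0 ≤ H * (V / δ ^ 2) := by positivity
      set N : ℕ := ⌈(Real.log 2 + H + δ + H * (V / δ ^ 2)) * (2 / ε)⌉₊ + 1 with hNdef
      have hN1 : 0 < N := Nat.succ_pos _
      have hNR : (0:ℝ) < N := by exact_mod_cast hN1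
      have hNbig : Real.log 2 + H + δ + H * (V / δ ^ 2) ≤ (N : ℝ) * (ε / 2) := by
        have h1 : (Real.log 2 + H + δ + H * (V / δ ^ 2)) * (2 / ε) ≤ (N : ℝ) := by
          rw [hNdef]
          push_cast
          linarith [Nat.le_ceil ((Real.log 2 + H + δ + H * (V / δ ^ 2)) * (2 / ε))]
        have h2 := mul_le_mul_of_nonneg_right h1 (by positivity : (0:ℝ) ≤ ε / 2)
        have e : (Real.log 2 + H + δ + H * (V / δ ^ 2)) * (2 / ε) * (ε / 2)
            = Real.log 2 + H + δ + H * (V / δ ^ 2) := by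
          field_simp
        rw [e] at h2
        exact h2
      set n : ℕ := ⌈t * (N : ℝ)⌉₊ with hndef
      have hn_pos : 0 < n := by
        rw [hndef]
        exact Nat.ceil_pos.mpr (by positivity)
      have hnN : n ≤ N := by
        rw [hndef]
        refine Nat.ceil_le.mpr ?_
        nlinarith
      have hn_le : (n : ℝ) ≤ t * N + 1 := by
        rw [hndef]
        exact le_of_lt (Nat.ceil_lt_add_one (by positivity))
      have hn_ge : t * (N : ℝ) ≤ (n : ℝ) := by rw [hndef]; exact Nat.le_ceil _
      obtain ⟨c, φ, hcard, hent⟩ := code_exists hq hn_pos hδ0 (le_of_le_of_eq hδH hHdef)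
      rw [← hHdef] at hcard
      rw [← hHdef, ← hVdef] at hent
      have ha2 : t * (N : ℝ) * δ ≤ (N : ℝ) * (ε / 2) := by
        nlinarith [mul_nonneg (Nat.cast_nonneg N : (0:ℝ) ≤ (N:ℝ)) hδ0.le,
          mul_nonneg (mul_nonneg (by linarith : (0:ℝ) ≤ 1 - t)
            (Nat.cast_nonneg N : (0:ℝ) ≤ (N:ℝ))) hδ0.le]
      have hrate : Real.log ((c + 1 : ℕ) : ℝ) ≤ (N : ℝ) * (t * H + ε) := by
        have he1 : (1 : ℝ) ≤ Real.exp ((n : ℝ) * (H + δ)) := Real.one_le_exp (by positivity)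
        have hc1 : ((c : ℝ) + 1) ≤ 2 * Real.exp ((n : ℝ) * (H + δ)) := by linarith
        have hlog : Real.log ((c : ℝ) + 1) ≤ Real.log 2 + (n : ℝ) * (H + δ) := by
          calc Real.log ((c : ℝ) + 1) ≤ Real.log (2 * Real.exp ((n : ℝ) * (H + δ))) :=
              Real.log_le_log (by positivity) hc1
            _ = Real.log 2 + (n : ℝ) * (H + δ) := by
              rw [Real.log_mul two_ne_zero (Real.exp_ne_zero _), Real.log_exp]
        have hcast : ((c + 1 : ℕ) : ℝ) = (c : ℝ) + 1 := by push_cast; ring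
        rw [hcast]
        have ha1 : Real.log 2 + H + δ ≤ (N : ℝ) * (ε / 2) := by linarith
        have h2 : (n : ℝ) * (H + δ) ≤ (t * N + 1) * (H + δ) :=
          mul_le_mul_of_nonneg_right hn_le (by linarith)
        nlinarith [hlog, h2, ha1, ha2]
      refine ⟨N, c + 1, c + 1, hN1, hrate, hrate,
        (fun x : Fin N → 𝒳 => φ (fun i => ζ1 (x (Fin.castLE hnN i)))),
        (fun z : Fin N → 𝒵 => φ (fun i => ζ2 (z (Fin.castLE hnN i)))), ?_⟩
      have hFG : ∀ ω : Fin N → 𝒳 × 𝒵, iid N p ω ≠ 0 →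
          (fun ω : Fin N → 𝒳 × 𝒵 => φ (fun i => ζ1 ((ω (Fin.castLE hnN i)).1))) ω
            = (fun ω : Fin N → 𝒳 × 𝒵 => φ (fun i => ζ2 ((ω (Fin.castLE hnN i)).2))) ω := by
        intro ω hω
        have hfac : ∀ j : Fin N, p (ω j) ≠ 0 := by
          intro j hz
          exact hω (Finset.prod_eq_zero (Finset.mem_univ j) hz)
        refine congrArg φ (funext fun i => ?_)
        refine hcommon _ _ ?_
        rw [Prod.mk.eta]
        exact hfac _
      have heq1 : MI (iid N p)
          (fun ω : Fin N → 𝒳 × 𝒵 => φ (fun i => ζ1 ((ω (Fin.castLE hnN i)).1)))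
          (fun ω : Fin N → 𝒳 × 𝒵 => φ (fun i => ζ2 ((ω (Fin.castLE hnN i)).2)))
          = Hof (iid N p)
            (fun ω : Fin N → 𝒳 × 𝒵 => φ (fun i => ζ1 ((ω (Fin.castLE hnN i)).1))) :=
        MI_diag _ _ hFG
      have hpm : pmap (fun ω : Fin N → 𝒳 × 𝒵 => φ (fun i => ζ1 ((ω (Fin.castLE hnN i)).1)))
          (iid N p) = pmap φ (iid n q) := by
        have h2 : pmap (fun (ω : Fin N → 𝒳 × 𝒵) (i : Fin n) => ζ1 ((ω (Fin.castLE hnN i)).1))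
            (iid N p) = iid n q := pmap_iid hp (fun w : 𝒳 × 𝒵 => ζ1 w.1) hnN
        calc pmap (fun ω : Fin N → 𝒳 × 𝒵 => φ (fun i => ζ1 ((ω (Fin.castLE hnN i)).1)))
              (iid N p)
            = pmap φ (pmap (fun (ω : Fin N → 𝒳 × 𝒵) (i : Fin n) => ζ1 ((ω (Fin.castLE hnN i)).1))
                (iid N p)) :=
              pmap_comp (fun (ω : Fin N → 𝒳 × 𝒵) (i : Fin n) => ζ1 ((ω (Fin.castLE hnN i)).1)) φ
          _ = pmap φ (iid n q) := by rw [h2]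
      have heq2 : Hof (iid N p)
          (fun ω : Fin N → 𝒳 × 𝒵 => φ (fun i => ζ1 ((ω (Fin.castLE hnN i)).1)))
          = ent (pmap φ (iid n q)) := by
        unfold Hof
        rw [hpm]
      have hfinal : (t * H - ε) * (N : ℝ) ≤ (H - δ) * ((n : ℝ) - V / δ ^ 2) := by
        have s1 : (H - δ) * (t * (N : ℝ) - V / δ ^ 2) ≤ (H - δ) * ((n : ℝ) - V / δ ^ 2) :=
          mul_le_mul_of_nonneg_left (by linarith) (by linarith)
        have ha3 : H * (V / δ ^ 2) ≤ (N : ℝ) * (ε / 2) := by linarith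
        have hδV : 0 ≤ δ * (V / δ ^ 2) := by positivity
        nlinarith [s1, ha2, ha3, hδV]
      have hmain : t * H - ε ≤ MI (iid N p)
          (fun ω : Fin N → 𝒳 × 𝒵 => φ (fun i => ζ1 ((ω (Fin.castLE hnN i)).1)))
          (fun ω : Fin N → 𝒳 × 𝒵 => φ (fun i => ζ2 ((ω (Fin.castLE hnN i)).2))) / (N : ℝ) := by
        rw [le_div_iff₀ hNR, heq1, heq2]
        linarith [hent]
      exact hmain
  rw [Metric.mem_closure_iff]
  intro ε hε
  refine ⟨(t * H - ε / 2, t * H + ε / 2, t * H + ε / 2), key (ε / 2) (by linarith), ?_⟩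
  simp only [Prod.dist_eq, Real.dist_eq]
  rw [max_lt_iff, max_lt_iff]
  refine ⟨?_, ?_, ?_⟩ <;> rw [abs_lt] <;> constructor <;> linarith

end Biclustering
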